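/- Let z = (z₁, z₂) ∈ ℝ², γ₀ ∈ ℝ with γ₀ > z₂, and let A₀ : ℝ → ℝ be continuously differentiable. Define A on the open half-plane H = {x ∈ ℝ² : x₂ > z₂} by A(x) = A₀(p₁(x)) · ((γ₀ − z₂)/(x₂ − z₂))^(1/2), where p₁(x) = z₁ + ((γ₀ − z₂)/(x₂ − z₂))·(x₁ − z₁) is the first coordinate of the intersection of the ray from z through x with the line {x₂ = γ₀}. Then: (i) A is continuously differentiable on H; (ii) A satisfies the transport equation ∇A·∇φ + (1/2) A Δφ = 0 on H, where φ(x) = ‖x − z‖; and (iii) A(x₁, γ₀) = A₀(x₁) for all x₁ ∈ ℝ. In particular, for any γ₁ with z₂ < γ₁ < γ₀ and any x = (x₁, γ₁), A(x) = A₀(p₁(x)) · ((γ₀ − z₂)/(γ₁ − z₂))^(1/2). -/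

import Mathlib

open scoped BigOperators

/-- The Laplacian of a real-valued function on the Euclidean plane, defined as the
divergence of the gradient: `Δf(x) = ∑ i, ∂ᵢ (∇f)ᵢ (x)`. -/
noncomputable def planeLaplacian (f : EuclideanSpace ℝ (Fin 2) → ℝ)
    (x : EuclideanSpace ℝ (Fin 2)) : ℝ :=
  ∑ i : Fin 2, fderiv ℝ (fun y => gradient f y i) x (EuclideanSpace.single i 1)

open scoped RealInnerProductSpace

local notation "E2" => EuclideanSpace ℝ (Fin 2)

lemma hasFDerivAt_norm_sub (z x : E2) (hx : x ≠ z) :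
    HasFDerivAt (fun y => ‖y - z‖) (‖x - z‖⁻¹ • (innerSL ℝ (x - z))) x := by
  have hne : x - z ≠ 0 := sub_ne_zero.mpr hx
  have hr : ‖x - z‖ ≠ 0 := norm_ne_zero_iff.mpr hne
  have h1 : HasFDerivAt (fun y : E2 => y - z) (ContinuousLinearMap.id ℝ E2) x :=
    (hasFDerivAt_id x).sub_const z
  have h2 := h1.inner ℝ h1
  have hq : (inner ℝ (x - z) (x - z) : ℝ) ≠ 0 := by
    rw [real_inner_self_eq_norm_mul_norm]; positivity
  have h3 := (Real.hasDerivAt_sqrt hq).comp_hasFDerivAt x h2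
  have heq : (fun y : E2 => Real.sqrt (inner ℝ (y - z) (y - z) : ℝ)) = fun y => ‖y - z‖ := by
    funext y
    rw [real_inner_self_eq_norm_mul_norm, Real.sqrt_mul_self (norm_nonneg _)]
  rw [Function.comp_def, heq] at h3
  refine h3.congr_fderiv ?_
  ext v
  simp only [ContinuousLinearMap.smul_apply, ContinuousLinearMap.coe_comp',
    Function.comp_apply, ContinuousLinearMap.prod_apply, ContinuousLinearMap.id_apply,
    fderivInnerCLM_apply, innerSL_apply_apply, smul_eq_mul]
  rw [real_inner_comm v (x - z), real_inner_self_eq_norm_mul_norm,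
    Real.sqrt_mul_self (norm_nonneg _)]
  field_simp
  ring

lemma hasGradientAt_norm_sub (z x : E2) (hx : x ≠ z) :
    HasGradientAt (fun y => ‖y - z‖) (‖x - z‖⁻¹ • (x - z)) x := by
  rw [hasGradientAt_iff_hasFDerivAt]
  refine (hasFDerivAt_norm_sub z x hx).congr_fderiv ?_
  ext v
  simp [InnerProductSpace.toDual_apply_apply, real_inner_smul_left]

lemma planeLaplacian_norm_sub' (z x : E2) (hx : x ≠ z) (i : Fin 2) :
    fderiv ℝ (fun y => gradient (fun w => ‖w - z‖) y i) x (EuclideanSpace.single i 1)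
      = ‖x - z‖⁻¹ - (‖x - z‖^2)⁻¹ * ‖x - z‖⁻¹ * ((x - z) i)^2 := by
  have hne : x - z ≠ 0 := sub_ne_zero.mpr hx
  have hr : ‖x - z‖ ≠ 0 := norm_ne_zero_iff.mpr hne
  have hee : (fun y => gradient (fun w : E2 => ‖w - z‖) y i)
      =ᶠ[nhds x] (fun y => ‖y - z‖⁻¹ * (y i - z i)) := by
    filter_upwards [isOpen_ne.mem_nhds hx] with y hy
    rw [(hasGradientAt_norm_sub z y hy).gradient]
    simp [smul_eq_mul]
  rw [hee.fderiv_eq]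
  have hinv := (hasDerivAt_inv hr).comp_hasFDerivAt x (hasFDerivAt_norm_sub z x hx)
  have hproj : HasFDerivAt (fun y : E2 => y i - z i) (EuclideanSpace.proj i : E2 →L[ℝ] ℝ) x := by
    have := ((EuclideanSpace.proj (𝕜 := ℝ) i).hasFDerivAt (x := x)).sub_const (z i)
    exact this
  simp only [Function.comp_def] at hinv
  have hmul := hinv.mul hproj
  rw [show (fun y : E2 => ‖y - z‖⁻¹ * (y i - z i)) = ((fun x => ‖x - z‖⁻¹) * fun y : E2 => y i - z i) from rfl, hmul.fderiv]
  simp only [ContinuousLinearMap.add_apply, ContinuousLinearMap.smul_apply,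
    ContinuousLinearMap.coe_comp', Function.comp_apply, innerSL_apply_apply, smul_eq_mul,
    EuclideanSpace.single_apply, if_pos rfl]
  rw [show ((EuclideanSpace.proj i : E2 →L[ℝ] ℝ) (EuclideanSpace.single i 1)) = 1 by simp [EuclideanSpace.single_apply]]
  rw [EuclideanSpace.inner_single_right]
  simp only [RCLike.conj_to_real, one_mul, PiLp.sub_apply]
  ring

lemma planeLaplacian_norm_sub (z x : E2) (hx : x ≠ z) :
    planeLaplacian (fun y => ‖y - z‖) x = ‖x - z‖⁻¹ := by
  have hne : x - z ≠ 0 := sub_ne_zero.mpr hx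
  have hr : ‖x - z‖ ≠ 0 := norm_ne_zero_iff.mpr hne
  have hsq : (x 0 - z 0)^2 + (x 1 - z 1)^2 = ‖x - z‖^2 := by
    rw [EuclideanSpace.norm_eq, Real.sq_sqrt (by positivity)]
    simp [Fin.sum_univ_two, sq_abs, PiLp.sub_apply]
  unfold planeLaplacian
  rw [Fin.sum_univ_two, planeLaplacian_norm_sub' z x hx 0, planeLaplacian_norm_sub' z x hx 1]
  simp only [PiLp.sub_apply]
  field_simp
  linarith [hsq]

/-- The amplitude `A(x) = A₀(p₁(x)) · ((γ₀ − z₂)/(x₂ − z₂))^(1/2)` obtained by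
transporting a `C¹` boundary amplitude `A₀` given on the line `x₂ = γ₀` along the rays
through `z` is `C¹` on the half-plane `H = {x : x₂ > z₂}`, satisfies the transport
equation `∇A·∇φ + (1/2) A Δφ = 0` there (`φ(x) = ‖x − z‖`), and has trace `A₀` on the
line `x₂ = γ₀`; in particular on a line `x₂ = γ₁` with `z₂ < γ₁ < γ₀` it equals
`A₀(p₁(x)) · ((γ₀ − z₂)/(γ₁ − z₂))^(1/2)`. -/
theorem transported_amplitude (z : EuclideanSpace ℝ (Fin 2)) (γ₀ : ℝ) (hγ₀ : z 1 < γ₀)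
    (A₀ : ℝ → ℝ) (hA₀ : ContDiff ℝ 1 A₀) :
    let p₁ : EuclideanSpace ℝ (Fin 2) → ℝ :=
      fun x => z 0 + ((γ₀ - z 1) / (x 1 - z 1)) * (x 0 - z 0)
    let A : EuclideanSpace ℝ (Fin 2) → ℝ :=
      fun x => A₀ (p₁ x) * ((γ₀ - z 1) / (x 1 - z 1)) ^ ((1:ℝ)/2)
    let H : Set (EuclideanSpace ℝ (Fin 2)) := {x | z 1 < x 1}
    ContDiffOn ℝ 1 A H ∧
    (∀ x ∈ H,
      (inner ℝ (gradient A x) (gradient (fun y : EuclideanSpace ℝ (Fin 2) => ‖y - z‖) x) : ℝ)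
        + (1/2) * A x * planeLaplacian (fun y => ‖y - z‖) x = 0) ∧
    (∀ x : EuclideanSpace ℝ (Fin 2), x 1 = γ₀ → A x = A₀ (x 0)) ∧
    (∀ γ₁ : ℝ, z 1 < γ₁ → γ₁ < γ₀ → ∀ x : EuclideanSpace ℝ (Fin 2), x 1 = γ₁ →
      A x = A₀ (p₁ x) * ((γ₀ - z 1) / (γ₁ - z 1)) ^ ((1:ℝ)/2)) := by
  intro p₁ A H
  have hc : (0:ℝ) < γ₀ - z 1 := sub_pos.mpr hγ₀
  -- coordinate projections
  have hproj : ∀ (i : Fin 2) (x : E2), HasFDerivAt (fun y : E2 => y i)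
      (EuclideanSpace.proj (𝕜 := ℝ) i : E2 →L[ℝ] ℝ) x := by
    intro i x
    exact (EuclideanSpace.proj (𝕜 := ℝ) i).hasFDerivAt
  have hprojCD : ∀ i : Fin 2, ContDiff ℝ 1 (fun y : E2 => y i) := by
    intro i
    exact (EuclideanSpace.proj (𝕜 := ℝ) i : E2 →L[ℝ] ℝ).contDiff
  refine ⟨?_, ?_, ?_, ?_⟩
  · -- ContDiffOn
    intro x hx
    have hu : (0:ℝ) < x 1 - z 1 := sub_pos.mpr hx
    have hk : (γ₀ - z 1) / (x 1 - z 1) ≠ 0 := ne_of_gt (div_pos hc hu)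
    have hqCD : ContDiffAt ℝ 1 (fun y : E2 => (γ₀ - z 1) / (y 1 - z 1)) x :=
      contDiffAt_const.div ((hprojCD 1).contDiffAt.sub contDiffAt_const) hu.ne'
    refine ContDiffAt.contDiffWithinAt ?_
    exact ((hA₀.contDiffAt).comp x
        (contDiffAt_const.add (hqCD.mul ((hprojCD 0).contDiffAt.sub contDiffAt_const)))).mul
      (hqCD.rpow_const_of_ne hk)
  · -- transport equation
    intro x hx
    have hu : (0:ℝ) < x 1 - z 1 := sub_pos.mpr hx
    have hxz : x ≠ z := by
      intro h
      have hx' : z 1 < x 1 := hx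
      rw [h] at hx'
      exact lt_irrefl _ hx'
    have hne : x - z ≠ 0 := sub_ne_zero.mpr hxz
    have hr : ‖x - z‖ ≠ 0 := norm_ne_zero_iff.mpr hne
    set k : ℝ := (γ₀ - z 1) / (x 1 - z 1) with hkdef
    have hkpos : 0 < k := div_pos hc hu
    -- derivative of y ↦ y 1 - z 1
    have h1 : HasFDerivAt (fun y : E2 => y 1 - z 1)
        (EuclideanSpace.proj (𝕜 := ℝ) 1 : E2 →L[ℝ] ℝ) x := (hproj 1 x).sub_const _
    have hinv := (hasDerivAt_inv hu.ne').comp_hasFDerivAt x h1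
    simp only [Function.comp_def] at hinv
    have hq : HasFDerivAt (fun y : E2 => (γ₀ - z 1) / (y 1 - z 1))
        ((γ₀ - z 1) • (-((x 1 - z 1) ^ 2)⁻¹ • (EuclideanSpace.proj (𝕜 := ℝ) 1 : E2 →L[ℝ] ℝ))) x := by
      simpa [div_eq_mul_inv] using hinv.const_mul (γ₀ - z 1)
    have hp : HasFDerivAt p₁ _ x :=
      ((hq.mul ((hproj 0 x).sub_const (z 0)))).const_add (z 0)
    have hA₀d : HasDerivAt A₀ (deriv A₀ (p₁ x)) (p₁ x) :=
      ((hA₀.differentiable one_ne_zero) (p₁ x)).hasDerivAt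
    have hAcomp := hA₀d.comp_hasFDerivAt x hp
    have hrpow : HasDerivAt (fun t : ℝ => t ^ ((1:ℝ)/2)) ((1/2) * k ^ ((1:ℝ)/2 - 1)) k :=
      Real.hasDerivAt_rpow_const (Or.inl hkpos.ne')
    have hg := hrpow.comp_hasFDerivAt x hq
    have hA : HasFDerivAt A _ x := hAcomp.mul hg
    have hgradA := hasFDerivAt_iff_hasGradientAt.mp hA
    rw [hgradA.gradient, (hasGradientAt_norm_sub z x hxz).gradient,
      planeLaplacian_norm_sub z x hxz, InnerProductSpace.toDual_symm_apply]
    simp only [ContinuousLinearMap.add_apply, ContinuousLinearMap.smul_apply,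
      ContinuousLinearMap.coe_comp', Function.comp_apply, smul_eq_mul, map_smul,
      PiLp.smul_apply, PiLp.sub_apply, neg_mul, neg_smul, ContinuousLinearMap.neg_apply]
    have hproj_apply : ∀ (i : Fin 2) (w : E2),
        (EuclideanSpace.proj (𝕜 := ℝ) i : E2 →L[ℝ] ℝ) w = w i := fun _ _ => rfl
    simp only [hproj_apply, PiLp.smul_apply, PiLp.sub_apply, smul_eq_mul]
    have hk32 : k ^ ((1:ℝ)/2 - 1) = k ^ ((1:ℝ)/2) / k := by
      rw [eq_div_iff hkpos.ne']
      nth_rewrite 2 [← Real.rpow_one k]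
      rw [← Real.rpow_add hkpos]
      norm_num
    rw [hk32]
    show _ + (1/2) * (A₀ (p₁ x) * k ^ ((1:ℝ)/2)) * ‖x - z‖⁻¹ = 0
    rw [← hkdef]
    have hcu : γ₀ - z 1 = k * (x 1 - z 1) := by rw [hkdef]; field_simp
    rw [hcu]
    field_simp
    ring
  · -- trace
    intro x hx1
    show A₀ (z 0 + (γ₀ - z 1) / (x 1 - z 1) * (x 0 - z 0)) * ((γ₀ - z 1) / (x 1 - z 1)) ^ ((1:ℝ)/2) = A₀ (x 0)
    rw [hx1, div_self (ne_of_gt (sub_pos.mpr hγ₀)), Real.one_rpow, mul_one, one_mul]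
    congr 1
    ring
  · intro γ₁ _ _ x hx1
    show A₀ (p₁ x) * ((γ₀ - z 1) / (x 1 - z 1)) ^ ((1:ℝ)/2) = _
    rw [hx1]
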